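/- Let f : [0,1] → [0,1] be continuous, and suppose there exist points x < y < z in [0,1] with f(x) < x, f(y) ≥ z, and f(z) ≤ x (f has a divergent cycle configuration). Then for every pair of positive integers p, q with q ≥ 3p + 3, f has a periodic point of period dividing q whose orbit under the associated interval loop makes exactly p passes through the block L → J → K₁ (in particular, f has periodic points of all periods n ≥ 2). -/

import Mathlib

open Set

private lemma fix_aux {g : ℝ → ℝ} (hg : Continuous g) {α β : ℝ} (hab : α ≤ β)
    (h : Icc α β ⊆ g '' Icc α β) : ∃ w ∈ Icc α β, g w = w := by
  obtain ⟨s, hs, hgs⟩ := h (left_mem_Icc.mpr hab)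
  obtain ⟨t, ht, hgt⟩ := h (right_mem_Icc.mpr hab)
  have hs1 : g s - s ≤ 0 := by rw [hgs]; linarith [hs.1]
  have ht1 : 0 ≤ g t - t := by rw [hgt]; linarith [ht.2]
  have hc : Continuous fun x => g x - x := hg.sub continuous_id
  rcases le_total s t with hst | hts
  · obtain ⟨w, hw, hw0⟩ := intermediate_value_Icc hst hc.continuousOn ⟨hs1, ht1⟩
    simp only at hw0
    exact ⟨w, ⟨hs.1.trans hw.1, hw.2.trans ht.2⟩, by linarith⟩
  · obtain ⟨w, hw, hw0⟩ := intermediate_value_Icc' hts hc.continuousOn ⟨hs1, ht1⟩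
    simp only at hw0
    exact ⟨w, ⟨ht.1.trans hw.1, hw.2.trans hs.2⟩, by linarith⟩

/-- increasing case: s ≤ t, g s = u, g t = v, u ≤ v -/
private lemma sub_aux' {g : ℝ → ℝ} (hg : Continuous g) {s t u v : ℝ} (hst : s ≤ t)
    (huv : u ≤ v) (hgs : g s = u) (hgt : g t = v) :
    ∃ α β, s ≤ α ∧ α ≤ β ∧ β ≤ t ∧ g '' Icc α β = Icc u v := by
  set T : Set ℝ := {x ∈ Icc s t | g x = v} with hT
  have hTc : IsClosed T := (isClosed_Icc.inter (isClosed_singleton.preimage hg) : _)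
  have hTne : T.Nonempty := ⟨t, right_mem_Icc.mpr hst, hgt⟩
  have hTbdd : BddBelow T := ⟨s, fun x hx => hx.1.1⟩
  set β := sInf T with hβ
  have hβT : β ∈ T := hTc.csInf_mem hTne hTbdd
  have hsβ : s ≤ β := hβT.1.1
  have hβt : β ≤ t := hβT.1.2
  have hgβ : g β = v := hβT.2
  set S : Set ℝ := {x ∈ Icc s β | g x = u} with hS
  have hSc : IsClosed S := (isClosed_Icc.inter (isClosed_singleton.preimage hg) : _)
  have hSne : S.Nonempty := ⟨s, left_mem_Icc.mpr hsβ, hgs⟩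
  have hSbdd : BddAbove S := ⟨β, fun x hx => hx.1.2⟩
  set α := sSup S with hα
  have hαS : α ∈ S := hSc.csSup_mem hSne hSbdd
  have hsα : s ≤ α := hαS.1.1
  have hαβ : α ≤ β := hαS.1.2
  have hgα : g α = u := hαS.2
  refine ⟨α, β, hsα, hαβ, hβt, ?_⟩
  apply Subset.antisymm
  · rintro _ ⟨w, hw, rfl⟩
    by_contra hmem
    simp only [mem_Icc, not_and_or, not_le] at hmem
    rcases hmem with hlt | hlt
    · -- g w < u : IVT on [w, β] hits u
      have : u ∈ Icc (g w) (g β) := ⟨hlt.le, hgβ ▸ huv⟩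
      obtain ⟨w', hw', hgw'⟩ := intermediate_value_Icc hw.2 hg.continuousOn this
      have hw'S : w' ∈ S := ⟨⟨hsα.trans (hw.1.trans hw'.1), hw'.2⟩, hgw'⟩
      have : w' ≤ α := le_csSup hSbdd hw'S
      have hwα : w = α := le_antisymm (by linarith [hw'.1]) hw.1
      rw [hwα, hgα] at hlt; exact lt_irrefl _ hlt
    · -- v < g w : IVT on [α, w] hits v
      have : v ∈ Icc (g α) (g w) := ⟨hgα ▸ huv, hlt.le⟩
      obtain ⟨w', hw', hgw'⟩ := intermediate_value_Icc hw.1 hg.continuousOn this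
      have hw'T : w' ∈ T := ⟨⟨hsα.trans hw'.1, hw'.2.trans (hw.2.trans hβt)⟩, hgw'⟩
      have : β ≤ w' := csInf_le hTbdd hw'T
      have hwβ : w = β := le_antisymm hw.2 (by linarith [hw'.2])
      rw [hwβ, hgβ] at hlt; exact lt_irrefl _ hlt
  · intro p hp
    have := intermediate_value_Icc hαβ hg.continuousOn
    rw [hgα, hgβ] at this
    exact this hp

private lemma sub_aux {g : ℝ → ℝ} (hg : Continuous g) {a b u v : ℝ} (hab : a ≤ b)
    (huv : u ≤ v) (h : Icc u v ⊆ g '' Icc a b) :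
    ∃ α β, a ≤ α ∧ α ≤ β ∧ β ≤ b ∧ g '' Icc α β = Icc u v := by
  obtain ⟨s, hs, hgs⟩ := h (left_mem_Icc.mpr huv)
  obtain ⟨t, ht, hgt⟩ := h (right_mem_Icc.mpr huv)
  rcases le_total s t with hst | hts
  · obtain ⟨α, β, h1, h2, h3, h4⟩ := sub_aux' hg hst huv hgs hgt
    exact ⟨α, β, hs.1.trans h1, h2, h3.trans ht.2, h4⟩
  · -- reflect: h x = g (-x) on [-s, -t]... here t ≤ s, g t = v, g s = u
    have hg' : Continuous (fun x => g (-x)) := hg.comp continuous_neg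
    have : (fun x => g (-x)) (-s) = u := by simpa using hgs
    have h2 : (fun x => g (-x)) (-t) = v := by simpa using hgt
    obtain ⟨α, β, h1', h2', h3', h4'⟩ := sub_aux' hg' (neg_le_neg hts) huv this h2
    refine ⟨-β, -α, by linarith [ht.1], by linarith, by linarith [hs.2], ?_⟩
    rw [← h4']
    ext q
    constructor
    · rintro ⟨w, hw, rfl⟩
      exact ⟨-w, ⟨by linarith [hw.2], by linarith [hw.1]⟩, by simp⟩
    · rintro ⟨w, hw, rfl⟩
      exact ⟨-w, ⟨by linarith [hw.2], by linarith [hw.1]⟩, rfl⟩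

private lemma chain_aux {f : ℝ → ℝ} (hf : Continuous f) (u v : ℕ → ℝ)
    (hle : ∀ i, u i ≤ v i) (n : ℕ)
    (hcov : ∀ i < n, Icc (u (i+1)) (v (i+1)) ⊆ f '' Icc (u i) (v i)) :
    ∀ m ≤ n, ∃ α β, u 0 ≤ α ∧ α ≤ β ∧ β ≤ v 0 ∧
      f^[m] '' Icc α β = Icc (u m) (v m) ∧
      ∀ j ≤ m, f^[j] '' Icc α β ⊆ Icc (u j) (v j) := by
  intro m
  induction m with
  | zero =>
    intro _
    refine ⟨u 0, v 0, le_refl _, hle 0, le_refl _, by simp, ?_⟩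
    intro j hj
    interval_cases j
    simp
  | succ m ih =>
    intro hm
    obtain ⟨α, β, h0, hαβ, h1, him, hall⟩ := ih (le_of_lt hm)
    have hcov' : Icc (u (m+1)) (v (m+1)) ⊆ f^[m+1] '' Icc α β := by
      rw [Function.iterate_succ', Set.image_comp, him]
      exact hcov m hm
    obtain ⟨α', β', h0', hαβ', h1', him'⟩ :=
      sub_aux (hf.iterate (m+1)) hαβ (hle (m+1)) hcov'
    have hsub : Icc α' β' ⊆ Icc α β := Icc_subset_Icc h0' h1'
    refine ⟨α', β', h0.trans h0', hαβ', h1'.trans h1, him', ?_⟩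
    intro j hj
    rcases Nat.lt_succ_iff_lt_or_eq.mp (Nat.lt_succ_of_le hj) with hj' | rfl
    · exact (Set.image_mono hsub).trans (hall j (Nat.lt_succ_iff.mp hj'))
    · exact him'.subset

private lemma itinerary {f : ℝ → ℝ} (hf : Continuous f) (u v : ℕ → ℝ)
    (hle : ∀ i, u i ≤ v i) (n : ℕ)
    (hcov : ∀ i < n, Icc (u (i+1)) (v (i+1)) ⊆ f '' Icc (u i) (v i))
    (hclose : Icc (u 0) (v 0) ⊆ Icc (u n) (v n)) :
    ∃ w, f^[n] w = w ∧ ∀ i ≤ n, f^[i] w ∈ Icc (u i) (v i) := by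
  obtain ⟨α, β, h0, hαβ, h1, him, hall⟩ := chain_aux hf u v hle n hcov n le_rfl
  have : Icc α β ⊆ f^[n] '' Icc α β := by
    rw [him]; exact (Icc_subset_Icc h0 h1).trans hclose
  obtain ⟨w, hw, hfw⟩ := fix_aux (hf.iterate n) hαβ this
  exact ⟨w, hfw, fun i hi => hall i hi ⟨w, hw, rfl⟩⟩

private lemma setup_aux (f : ℝ → ℝ) (hf : Continuous f)
    (x y z : ℝ) (hxy : x < y) (hyz : y < z)
    (h1 : f x < x) (h2 : z ≤ f y) (h3 : f z ≤ x) :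
    ∃ a b c : ℝ, x < a ∧ a < y ∧ f a = a ∧ y < b ∧ b < z ∧ f b = b ∧
      a < c ∧ c < y ∧ f c = b ∧
      Icc a b ⊆ f '' Icc a c ∧ Icc b z ⊆ f '' Icc c y ∧
      Icc b z ⊆ f '' Icc y b ∧ Icc a b ⊆ f '' Icc b z := by
  have hc : Continuous fun t => f t - t := hf.sub continuous_id
  obtain ⟨a, ha, hfa0⟩ := intermediate_value_Icc hxy.le hc.continuousOn
    (show (0:ℝ) ∈ Icc (f x - x) (f y - y) from ⟨by linarith, by linarith⟩)
  simp only at hfa0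
  have hfa : f a = a := by linarith
  have hxa : x < a := lt_of_le_of_ne ha.1 (by rintro rfl; linarith)
  have hay : a < y := lt_of_le_of_ne ha.2 (by rintro rfl; linarith)
  obtain ⟨b, hb, hfb0⟩ := intermediate_value_Icc' hyz.le hc.continuousOn
    (show (0:ℝ) ∈ Icc (f z - z) (f y - y) from ⟨by linarith, by linarith⟩)
  simp only at hfb0
  have hfb : f b = b := by linarith
  have hyb : y < b := lt_of_le_of_ne hb.1 (by rintro rfl; linarith)
  have hbz : b < z := lt_of_le_of_ne hb.2 (by rintro rfl; linarith)
  obtain ⟨c, hcm, hfc⟩ := intermediate_value_Icc hay.le hf.continuousOn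
    (show b ∈ Icc (f a) (f y) from ⟨by linarith, by linarith⟩)
  have hac : a < c := lt_of_le_of_ne hcm.1 (by rintro rfl; linarith)
  have hcy : c < y := lt_of_le_of_ne hcm.2 (by rintro rfl; linarith)
  refine ⟨a, b, c, hxa, hay, hfa, hyb, hbz, hfb, hac, hcy, hfc, ?_, ?_, ?_, ?_⟩
  · have := intermediate_value_Icc hac.le hf.continuousOn
    rw [hfa, hfc] at this; exact this
  · have := intermediate_value_Icc hcy.le hf.continuousOn
    rw [hfc] at this
    exact (Icc_subset_Icc le_rfl h2).trans this
  · have := intermediate_value_Icc' hyb.le hf.continuousOn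
    rw [hfb] at this
    exact (Icc_subset_Icc le_rfl h2).trans this
  · have := intermediate_value_Icc' hbz.le hf.continuousOn
    rw [hfb] at this
    exact (Icc_subset_Icc (by linarith) le_rfl).trans this

set_option maxHeartbeats 1600000 in
theorem stmt11 (f : ℝ → ℝ) (hf : Continuous f)
    (hmaps : Set.MapsTo f (Set.Icc 0 1) (Set.Icc 0 1))
    (x y z : ℝ) (hx : x ∈ Set.Icc (0:ℝ) 1) (hy : y ∈ Set.Icc (0:ℝ) 1)
    (hz : z ∈ Set.Icc (0:ℝ) 1) (hxy : x < y) (hyz : y < z)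
    (h1 : f x < x) (h2 : z ≤ f y) (h3 : f z ≤ x) :
    (∀ p q : ℕ, 0 < p → 3 * p + 3 ≤ q →
      ∃ a b c w : ℝ,
        x < a ∧ a < y ∧ f a = a ∧
        y < b ∧ b < z ∧ f b = b ∧
        a < c ∧ c < y ∧ f c = b ∧
        f^[q] w = w ∧
        ∀ i : ℕ, i < q →
          f^[i] w ∈
            (if i < q - 3 * p - 3 then Set.Icc a c
             else if i = q - 3 * p - 3 then Set.Icc y b
             else if (i - (q - 3 * p - 2)) % 3 = 0 then Set.Icc b z
             else if (i - (q - 3 * p - 2)) % 3 = 1 then Set.Icc a c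
             else Set.Icc c y)) ∧
    (∀ n : ℕ, 2 ≤ n → ∃ w : ℝ, f^[n] w = w ∧
      ∀ m : ℕ, 0 < m → m < n → f^[m] w ≠ w) := by
  obtain ⟨a, b, c, hxa, hay, hfa, hyb, hbz, hfb, hac, hcy, hfc, CJ, CK1, CK2, CL⟩ :=
    setup_aux f hf x y z hxy hyz h1 h2 h3
  -- six derived covering facts
  have hJJ : Icc a c ⊆ f '' Icc a c := (Icc_subset_Icc le_rfl (by linarith)).trans CJ
  have hJK1 : Icc c y ⊆ f '' Icc a c := (Icc_subset_Icc (by linarith) (by linarith)).trans CJ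
  have hJK2 : Icc y b ⊆ f '' Icc a c := (Icc_subset_Icc (by linarith) le_rfl).trans CJ
  have hLJ : Icc a c ⊆ f '' Icc b z := (Icc_subset_Icc le_rfl (by linarith)).trans CL
  have hLK1 : Icc c y ⊆ f '' Icc b z := (Icc_subset_Icc (by linarith) (by linarith)).trans CL
  have hLK2 : Icc y b ⊆ f '' Icc b z := (Icc_subset_Icc (by linarith) le_rfl).trans CL
  constructor
  · -- part 1
    intro p q hp hq
    set U : ℕ → ℝ := fun i =>
      if i = q then (if 0 < q - 3 * p - 3 then a else y)
      else if i < q - 3 * p - 3 then a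
      else if i = q - 3 * p - 3 then y
      else if (i - (q - 3 * p - 2)) % 3 = 0 then b
      else if (i - (q - 3 * p - 2)) % 3 = 1 then a
      else c with hU
    set V : ℕ → ℝ := fun i =>
      if i = q then (if 0 < q - 3 * p - 3 then c else b)
      else if i < q - 3 * p - 3 then c
      else if i = q - 3 * p - 3 then b
      else if (i - (q - 3 * p - 2)) % 3 = 0 then z
      else if (i - (q - 3 * p - 2)) % 3 = 1 then c
      else y with hV
    have hle : ∀ i, U i ≤ V i := by
      intro i
      simp only [hU, hV]
      split_ifs <;> linarith
    have hcov : ∀ i < q, Icc (U (i+1)) (V (i+1)) ⊆ f '' Icc (U i) (V i) := by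
      intro i hi
      simp only [hU, hV]
      split_ifs <;>
        first
          | (exfalso; omega)
          | exact hJJ | exact hJK1 | exact hJK2
          | exact hLJ | exact hLK1 | exact hLK2
          | exact CK1 | exact CK2
    have hclose : Icc (U 0) (V 0) ⊆ Icc (U q) (V q) := by
      have h0 : U q = U 0 := by simp only [hU]; split_ifs <;> first | rfl | omega
      have h0' : V q = V 0 := by simp only [hV]; split_ifs <;> first | rfl | omega
      rw [h0, h0']
    obtain ⟨w, hwper, hwit⟩ := itinerary hf U V hle q hcov hclose
    refine ⟨a, b, c, w, hxa, hay, hfa, hyb, hbz, hfb, hac, hcy, hfc, hwper, ?_⟩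
    intro i hi
    have hmem := hwit i hi.le
    simp only [hU, hV, if_neg hi.ne] at hmem
    split_ifs at hmem ⊢ <;> first | exact hmem | omega
  · -- part 2
    intro n hn
    rcases eq_or_lt_of_le hn with hn2 | hn3
    · -- n = 2
      subst hn2
      set U : ℕ → ℝ := fun i => if i = 0 ∨ i = 2 then c else b with hU
      set V : ℕ → ℝ := fun i => if i = 0 ∨ i = 2 then y else z with hV
      have hle : ∀ i, U i ≤ V i := by
        intro i; simp only [hU, hV]; split_ifs <;> linarith
      have hcov : ∀ i < 2, Icc (U (i+1)) (V (i+1)) ⊆ f '' Icc (U i) (V i) := by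
        intro i hi
        interval_cases i
        · simp only [hU, hV]; norm_num; exact CK1
        · simp only [hU, hV]; norm_num; exact hLK1
      have hclose : Icc (U 0) (V 0) ⊆ Icc (U 2) (V 2) := by
        simp only [hU, hV]; norm_num
      obtain ⟨w, hwper, hwit⟩ := itinerary hf U V hle 2 hcov hclose
      refine ⟨w, hwper, ?_⟩
      intro m hm0 hmn heq
      have hm1 : m = 1 := by omega
      subst hm1
      have h0 := hwit 0 (by omega)
      have h1' := hwit 1 (by omega)
      simp only [hU, hV, Function.iterate_zero, Function.iterate_one, id] at h0 h1'
      norm_num at h0 h1'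
      simp only [Function.iterate_one] at heq
      rw [heq] at h1'
      have := h0.2; have := h1'.1; linarith
    · -- n ≥ 3
      set U : ℕ → ℝ := fun i => if i = 0 ∨ i = n then c else if i = 1 then b else a with hU
      set V : ℕ → ℝ := fun i => if i = 0 ∨ i = n then y else if i = 1 then z else c with hV
      have hU0 : U 0 = c := by simp [hU]
      have hV0 : V 0 = y := by simp [hV]
      have hUn : U n = c := by simp [hU]
      have hVn : V n = y := by simp [hV]
      have hU1 : U 1 = b := by simp [hU, show 1 ≠ n by omega]
      have hV1 : V 1 = z := by simp [hV, show 1 ≠ n by omega]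
      have hUi : ∀ i, 2 ≤ i → i < n → U i = a := by
        intro i hi2 hin
        simp [hU, show i ≠ 0 by omega, show i ≠ n by omega, show i ≠ 1 by omega]
      have hVi : ∀ i, 2 ≤ i → i < n → V i = c := by
        intro i hi2 hin
        simp [hV, show i ≠ 0 by omega, show i ≠ n by omega, show i ≠ 1 by omega]
      have hle : ∀ i, U i ≤ V i := by
        intro i; simp only [hU, hV]; split_ifs <;> linarith
      have hcov : ∀ i < n, Icc (U (i+1)) (V (i+1)) ⊆ f '' Icc (U i) (V i) := by
        intro i hi
        by_cases h0 : i = 0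
        · subst h0
          rw [show (0:ℕ)+1 = 1 from rfl, hU1, hV1, hU0, hV0]
          exact CK1
        by_cases hone : i = 1
        · subst hone
          rw [show (1:ℕ)+1 = 2 from rfl, hUi 2 le_rfl hn3, hVi 2 le_rfl hn3, hU1, hV1]
          exact hLJ
        have hi2 : 2 ≤ i := by omega
        by_cases hlast : i + 1 = n
        · rw [hlast, hUn, hVn, hUi i hi2 hi, hVi i hi2 hi]
          exact hJK1
        · rw [hUi (i+1) (by omega) (by omega), hVi (i+1) (by omega) (by omega),
            hUi i hi2 hi, hVi i hi2 hi]
          exact hJJ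
      have hclose : Icc (U 0) (V 0) ⊆ Icc (U n) (V n) := by
        rw [hU0, hV0, hUn, hVn]
      obtain ⟨w, hwper, hwit⟩ := itinerary hf U V hle n hcov hclose
      refine ⟨w, hwper, ?_⟩
      intro m hm0 hmn heq
      have h0 := hwit 0 (by omega)
      rw [hU0, hV0, Function.iterate_zero, id_eq] at h0
      by_cases hm1 : m = 1
      · subst hm1
        have h1' := hwit 1 (by omega)
        rw [hU1, hV1, Function.iterate_one] at h1'
        simp only [Function.iterate_one] at heq
        rw [heq] at h1'
        have := h0.2; have := h1'.1; linarith
      · have hm2 : 2 ≤ m := by omega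
        have hm' := hwit m hmn.le
        rw [hUi m hm2 hmn, hVi m hm2 hmn, heq] at hm'
        have hwc : w = c := le_antisymm hm'.2 h0.1
        have h2' := hwit 2 (by omega)
        rw [hUi 2 le_rfl hn3, hVi 2 le_rfl hn3] at h2'
        have hfw2 : f^[2] w = b := by
          rw [show (2:ℕ) = 1 + 1 from rfl, Function.iterate_add_apply]
          simp only [Function.iterate_one]
          rw [hwc, hfc, hfb]
        rw [hfw2] at h2'
        have := h2'.2; linarith
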